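/- Let the mean-zero random field in finite dimensions be A(t) = U(t) Σ(t) Y(t)^T with U(t)^T U(t) = I, E[Y^T Y] = I, U^T U̇ = 0, E[Ẏ^T Y] = 0, and suppose dA/dt = F(t). Then dΣ/dt = U^T E[F Y] (i.e., Σ̇_{ij} = ⟨u_i, E[F y_j]⟩). -/

import Mathlib

open Matrix

/-- Finite-dimensional DBO evolution of the covariance factor: if
`A(t) = U(t) Σ(t) Y(t)ᵀ` with orthonormality (`Uᵀ U = I`, `E[Yᵀ Y] = I`) and gauge
conditions (`Uᵀ U̇ = 0`, `E[Ẏᵀ Y] = 0`), and `dA/dt = F`, then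
`Σ̇ = Uᵀ E[F Y]`, where the expectation is the weighted sample average with weights `w`. -/
theorem dbo_sigma_evolution
    {n N r : ℕ} (w : Fin N → ℝ)
    (A F : ℝ → Matrix (Fin n) (Fin N) ℝ)
    (U U' : ℝ → Matrix (Fin n) (Fin r) ℝ)
    (S S' : ℝ → Matrix (Fin r) (Fin r) ℝ)
    (Y Y' : ℝ → Matrix (Fin N) (Fin r) ℝ)
    (hUd : ∀ t i j, HasDerivAt (fun s => U s i j) (U' t i j) t)
    (hSd : ∀ t i j, HasDerivAt (fun s => S s i j) (S' t i j) t)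
    (hYd : ∀ t i j, HasDerivAt (fun s => Y s i j) (Y' t i j) t)
    (hA : ∀ t, A t = U t * S t * (Y t)ᵀ)
    (hAd : ∀ t i j, HasDerivAt (fun s => A s i j) (F t i j) t)
    (hUorth : ∀ t, (U t)ᵀ * U t = 1)
    (hYorth : ∀ t, (Y t)ᵀ * Matrix.diagonal w * Y t = 1)
    (hUg : ∀ t, (U t)ᵀ * U' t = 0)
    (hYg : ∀ t, (Y' t)ᵀ * Matrix.diagonal w * Y t = 0) :
    ∀ t, S' t = (U t)ᵀ * (F t * Matrix.diagonal w * Y t) := by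
  intro t
  set D := Matrix.diagonal w with hD
  -- F t equals the product-rule expansion
  have hGd : ∀ i j, HasDerivAt (fun s => (U s * S s * (Y s)ᵀ) i j)
      ((U' t * S t * (Y t)ᵀ + U t * S' t * (Y t)ᵀ + U t * S t * (Y' t)ᵀ) i j) t := by
    intro i j
    have h : HasDerivAt (fun s => ∑ l, (∑ k, U s i k * S s k l) * Y s j l)
        (∑ l, ((∑ k, (U' t i k * S t k l + U t i k * S' t k l)) * Y t j l
          + (∑ k, U t i k * S t k l) * Y' t j l)) t := by
      apply HasDerivAt.fun_sum
      intro l _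
      exact (HasDerivAt.fun_sum (fun k _ => (hUd t i k).mul (hSd t k l))).mul (hYd t j l)
    have he : (fun s => ∑ l, (∑ k, U s i k * S s k l) * Y s j l)
        = (fun s => (U s * S s * (Y s)ᵀ) i j) := by
      funext s
      simp [Matrix.mul_apply]
    rw [he] at h
    convert h using 1
    simp [Matrix.mul_apply, Matrix.add_apply, Finset.sum_add_distrib, add_mul,
      Finset.mul_sum, Finset.sum_mul]
  have hF : F t = U' t * S t * (Y t)ᵀ + U t * S' t * (Y t)ᵀ + U t * S t * (Y' t)ᵀ := by
    ext i j
    have h1 : HasDerivAt (fun s => (U s * S s * (Y s)ᵀ) i j) (F t i j) t := by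
      have he : (fun s => A s i j) = fun s => (U s * S s * (Y s)ᵀ) i j := by
        funext s; rw [hA]
      rw [← he]; exact hAd t i j
    exact h1.unique (hGd i j)
  rw [hF]
  have e1 : (U t)ᵀ * (U' t * S t * (Y t)ᵀ * D * Y t) = 0 := by
    rw [show (U t)ᵀ * (U' t * S t * (Y t)ᵀ * D * Y t)
      = ((U t)ᵀ * U' t) * (S t * ((Y t)ᵀ * D * Y t)) by
        simp [Matrix.mul_assoc], hUg]
    simp
  have e2 : (U t)ᵀ * (U t * S' t * (Y t)ᵀ * D * Y t) = S' t := by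
    rw [show (U t)ᵀ * (U t * S' t * (Y t)ᵀ * D * Y t)
      = ((U t)ᵀ * U t) * (S' t * ((Y t)ᵀ * D * Y t)) by
        simp [Matrix.mul_assoc], hUorth, hYorth]
    simp
  have e3 : (U t)ᵀ * (U t * S t * (Y' t)ᵀ * D * Y t) = 0 := by
    rw [show (U t)ᵀ * (U t * S t * (Y' t)ᵀ * D * Y t)
      = ((U t)ᵀ * U t) * (S t * ((Y' t)ᵀ * D * Y t)) by
        simp [Matrix.mul_assoc], hUorth, hYg]
    simp
  rw [Matrix.add_mul, Matrix.add_mul, Matrix.add_mul, Matrix.add_mul,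
    Matrix.mul_add, Matrix.mul_add, e1, e2, e3]
  simp
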